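/- Let f₁,…,f₁₀ be the ten quintics of the classifying map, in the stated order. For all y₁, y₂, y₃, y₄ ∈ ℂ, regard each fᵢ(1+ty₁, 1+ty₂, 1+ty₃, 1+ty₄, 1) as a polynomial in t. Then its coefficients of t⁰ and t¹ are 0 and its coefficient of t² equals 4hᵢ, where (h₁,…,h₁₀) = (y₄(y₂−y₃), y₂(y₃−y₄), y₄(y₁−y₃), y₃(y₁−y₄), y₄(y₁−y₂), y₂(y₁−y₄), y₃(y₁−y₂), y₂(y₁−y₃), (y₁−y₂)(y₃−y₄), (y₂−y₃)(y₁−y₄)). Moreover each quadric hᵢ vanishes at the five points (1,0,0,0), (0,1,0,0), (0,0,1,0), (0,0,0,1), (1,1,1,1) of ℂ⁴. -/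

import Mathlib

/-- The ten quintics `f₁,…,f₁₀` giving the classifying map `Φ : ℙ⁴ ⇢ ℙ⁹`
(indices 0-based: `v 0 = x₁, …, v 4 = x₅`). -/
def quintics {R : Type*} [CommRing R] (v : Fin 5 → R) : Fin 10 → R :=
  ![v 0 * (v 1 ^ 2 - v 2 ^ 2) * (v 3 ^ 2 - v 4 ^ 2),
    v 0 * (v 1 ^ 2 - v 4 ^ 2) * (v 2 ^ 2 - v 3 ^ 2),
    v 1 * (v 0 ^ 2 - v 2 ^ 2) * (v 3 ^ 2 - v 4 ^ 2),
    v 1 * (v 0 ^ 2 - v 3 ^ 2) * (v 2 ^ 2 - v 4 ^ 2),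
    v 2 * (v 0 ^ 2 - v 1 ^ 2) * (v 3 ^ 2 - v 4 ^ 2),
    v 2 * (v 0 ^ 2 - v 3 ^ 2) * (v 1 ^ 2 - v 4 ^ 2),
    v 3 * (v 0 ^ 2 - v 1 ^ 2) * (v 2 ^ 2 - v 4 ^ 2),
    v 3 * (v 0 ^ 2 - v 2 ^ 2) * (v 1 ^ 2 - v 4 ^ 2),
    v 4 * (v 0 ^ 2 - v 1 ^ 2) * (v 2 ^ 2 - v 3 ^ 2),
    v 4 * (v 0 ^ 2 - v 3 ^ 2) * (v 1 ^ 2 - v 2 ^ 2)]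

open Polynomial

/-- The ten quadrics `h₁,…,h₁₀` appearing on the exceptional divisor over the
point `p₁ = (1:1:1:1:1)` (indices 0-based: `y 0 = y₁, …, y 3 = y₄`). -/
def hquad (y : Fin 4 → ℂ) : Fin 10 → ℂ :=
  ![y 3 * (y 1 - y 2), y 1 * (y 2 - y 3),
    y 3 * (y 0 - y 2), y 2 * (y 0 - y 3),
    y 3 * (y 0 - y 1), y 1 * (y 0 - y 3),
    y 2 * (y 0 - y 1), y 1 * (y 0 - y 2),
    (y 0 - y 1) * (y 2 - y 3), (y 1 - y 2) * (y 0 - y 3)]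

/-- On the exceptional divisor over `p₁ = (1:1:1:1:1)`: each
`fᵢ(1+ty₁, 1+ty₂, 1+ty₃, 1+ty₄, 1)`, as a polynomial in `t`, has coefficients
of `t⁰` and `t¹` equal to `0` and coefficient of `t²` equal to `4hᵢ(y)`;
moreover each quadric `hᵢ` vanishes at the five points
`(1,0,0,0), (0,1,0,0), (0,0,1,0), (0,0,0,1), (1,1,1,1)` of `ℂ⁴`. -/
theorem map_on_exceptional_divisor_p1 :
    (∀ (y : Fin 4 → ℂ) (i : Fin 10),
      (quintics ![1 + C (y 0) * X, 1 + C (y 1) * X,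
          1 + C (y 2) * X, 1 + C (y 3) * X, 1] i).coeff 0 = 0 ∧
      (quintics ![1 + C (y 0) * X, 1 + C (y 1) * X,
          1 + C (y 2) * X, 1 + C (y 3) * X, 1] i).coeff 1 = 0 ∧
      (quintics ![1 + C (y 0) * X, 1 + C (y 1) * X,
          1 + C (y 2) * X, 1 + C (y 3) * X, 1] i).coeff 2 = 4 * hquad y i) ∧
    (∀ (i : Fin 10),
      ∀ p ∈ ({![1, 0, 0, 0], ![0, 1, 0, 0], ![0, 0, 1, 0], ![0, 0, 0, 1],
          ![1, 1, 1, 1]} : Set (Fin 4 → ℂ)), hquad p i = 0) := by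
  have key : ∀ (a b c d e : ℂ) (f : ℂ[X]),
      f = (1 + C a * X) * ((1 + C b * X) ^ 2 - (1 + C c * X) ^ 2) *
        ((1 + C d * X) ^ 2 - (1 + C e * X) ^ 2) →
      f.coeff 0 = 0 ∧ f.coeff 1 = 0 ∧ f.coeff 2 = 4 * ((b - c) * (d - e)) := by
    intro a b c d e f hf
    have hp : f = ((1 + C a * X) * ((C b - C c) * (2 + (C b + C c) * X)) *
        ((C d - C e) * (2 + (C d + C e) * X))) * X ^ 2 := by rw [hf]; ring
    rw [hp]
    refine ⟨by simp [coeff_mul_X_pow'], by simp [coeff_mul_X_pow'], ?_⟩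
    rw [coeff_mul_X_pow']
    norm_num [coeff_zero_eq_eval_zero]
    ring
  have block : ∀ (a b c d e h : ℂ) (f : ℂ[X]),
      f = (1 + C a * X) * ((1 + C b * X) ^ 2 - (1 + C c * X) ^ 2) *
        ((1 + C d * X) ^ 2 - (1 + C e * X) ^ 2) →
      4 * ((b - c) * (d - e)) = 4 * h →
      f.coeff 0 = 0 ∧ f.coeff 1 = 0 ∧ f.coeff 2 = 4 * h := by
    intro a b c d e h f hf hh
    obtain ⟨h0, h1, h2⟩ := key a b c d e f hf
    exact ⟨h0, h1, by rw [h2, hh]⟩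
  constructor
  · intro y i
    fin_cases i
    · exact block (y 0) (y 1) (y 2) (y 3) (0) _ _
        (by simp only [Polynomial.C_0, zero_mul, add_zero]; rfl)
        (by show (4:ℂ) * (((y 1) - (y 2)) * ((y 3) - (0))) = 4 * (y 3 * (y 1 - y 2)); ring)
    · exact block (y 0) (y 1) (0) (y 2) (y 3) _ _
        (by simp only [Polynomial.C_0, zero_mul, add_zero]; rfl)
        (by show (4:ℂ) * (((y 1) - (0)) * ((y 2) - (y 3))) = 4 * (y 1 * (y 2 - y 3)); ring)
    · exact block (y 1) (y 0) (y 2) (y 3) (0) _ _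
        (by simp only [Polynomial.C_0, zero_mul, add_zero]; rfl)
        (by show (4:ℂ) * (((y 0) - (y 2)) * ((y 3) - (0))) = 4 * (y 3 * (y 0 - y 2)); ring)
    · exact block (y 1) (y 0) (y 3) (y 2) (0) _ _
        (by simp only [Polynomial.C_0, zero_mul, add_zero]; rfl)
        (by show (4:ℂ) * (((y 0) - (y 3)) * ((y 2) - (0))) = 4 * (y 2 * (y 0 - y 3)); ring)
    · exact block (y 2) (y 0) (y 1) (y 3) (0) _ _
        (by simp only [Polynomial.C_0, zero_mul, add_zero]; rfl)
        (by show (4:ℂ) * (((y 0) - (y 1)) * ((y 3) - (0))) = 4 * (y 3 * (y 0 - y 1)); ring)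
    · exact block (y 2) (y 0) (y 3) (y 1) (0) _ _
        (by simp only [Polynomial.C_0, zero_mul, add_zero]; rfl)
        (by show (4:ℂ) * (((y 0) - (y 3)) * ((y 1) - (0))) = 4 * (y 1 * (y 0 - y 3)); ring)
    · exact block (y 3) (y 0) (y 1) (y 2) (0) _ _
        (by simp only [Polynomial.C_0, zero_mul, add_zero]; rfl)
        (by show (4:ℂ) * (((y 0) - (y 1)) * ((y 2) - (0))) = 4 * (y 2 * (y 0 - y 1)); ring)
    · exact block (y 3) (y 0) (y 2) (y 1) (0) _ _
        (by simp only [Polynomial.C_0, zero_mul, add_zero]; rfl)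
        (by show (4:ℂ) * (((y 0) - (y 2)) * ((y 1) - (0))) = 4 * (y 1 * (y 0 - y 2)); ring)
    · exact block (0) (y 0) (y 1) (y 2) (y 3) _ _
        (by simp only [Polynomial.C_0, zero_mul, add_zero]; rfl)
        (by show (4:ℂ) * (((y 0) - (y 1)) * ((y 2) - (y 3))) = 4 * ((y 0 - y 1) * (y 2 - y 3)); ring)
    · exact block (0) (y 0) (y 3) (y 1) (y 2) _ _
        (by simp only [Polynomial.C_0, zero_mul, add_zero]; rfl)
        (by show (4:ℂ) * (((y 0) - (y 3)) * ((y 1) - (y 2))) = 4 * ((y 1 - y 2) * (y 0 - y 3)); ring)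
  · intro i p hp
    rcases hp with rfl | rfl | rfl | rfl | rfl <;> fin_cases i <;> simp [hquad]
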